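/- Adversary lower bound for exact state conversion: let D be a finite set, X a finite-dimensional complex inner product space, O_x a unitary on X for each x ∈ D, and suppose a T-query quantum algorithm with oracle acting on X, with state space H, together with unit vectors ρ_x, σ_x ∈ H, satisfies A(O_x) ρ_x = σ_x for every x ∈ D. Then γ₂((⟨ρ_x, ρ_y⟩ − ⟨σ_x, σ_y⟩)_{x,y∈D} | (O_x − O_y)_{x,y∈D}) ≤ T, where the first family consists of complex scalars. -/

import Mathlib

noncomputable section

open scoped ENNReal ComplexOrder

/-- A linear endomorphism of a finite-dimensional complex inner product space is unitary. -/
def IsUnitaryMap {E : Type*} [NormedAddCommGroup E] [InnerProductSpace ℂ E]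
    [FiniteDimensional ℂ E] (f : E →ₗ[ℂ] E) : Prop :=
  LinearMap.adjoint f ∘ₗ f = LinearMap.id ∧ f ∘ₗ LinearMap.adjoint f = LinearMap.id

/-- Operator norm of a linear map between finite-dimensional inner product spaces. -/
noncomputable def opNorm {E F : Type*} [NormedAddCommGroup E] [InnerProductSpace ℂ E]
    [NormedAddCommGroup F] [InnerProductSpace ℂ F] [FiniteDimensional ℂ E]
    (f : E →ₗ[ℂ] F) : ℝ :=
  ‖LinearMap.toContinuousLinearMap f‖

/-- A complex scalar viewed as a linear map `ℂ → ℂ`. -/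
noncomputable def scalarMap (c : ℂ) : ℂ →ₗ[ℂ] ℂ := c • LinearMap.id

/-- The block-diagonal map `⊕ᵢ Δᵢ` on an `ℓ²`-direct sum of copies of a space. -/
noncomputable def piBlock {ι : Type*} [Fintype ι] {X₁ X₂ : Type*}
    [NormedAddCommGroup X₁] [InnerProductSpace ℂ X₁]
    [NormedAddCommGroup X₂] [InnerProductSpace ℂ X₂]
    (Δ : ι → (X₂ →ₗ[ℂ] X₁)) :
    PiLp 2 (fun _ : ι => X₂) →ₗ[ℂ] PiLp 2 (fun _ : ι => X₁) :=
  (WithLp.linearEquiv 2 ℂ (∀ _ : ι, X₁)).symm.toLinearMap ∘ₗ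
    (LinearMap.pi fun i => Δ i ∘ₗ LinearMap.proj i) ∘ₗ
      (WithLp.linearEquiv 2 ℂ (∀ _ : ι, X₂)).toLinearMap

/-- The relative `γ₂`-norm `γ₂(A | Δ)` of a family `A = (A_{xy} : Z₂ → Z₁)` relative to a
family `Δ = (Δ_{xy} : X₂ → X₁)`: the infimum over `k ∈ ℕ` and factorizations
`A_{xy} = Υ_x* ∘ (Δ_{xy} ⊗ id_{ℂᵏ}) ∘ Φ_y` of `max (max_x ‖Υ_x‖²) (max_y ‖Φ_y‖²)`,
where `X ⊗ ℂᵏ` is realized as the `ℓ²`-direct sum of `k` copies of `X`.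
The infimum of the empty set is `+∞`. -/
noncomputable def relGamma2 {D₁ D₂ : Type*} [Fintype D₁] [Fintype D₂]
    {X₁ X₂ Z₁ Z₂ : Type*}
    [NormedAddCommGroup X₁] [InnerProductSpace ℂ X₁] [FiniteDimensional ℂ X₁]
    [NormedAddCommGroup X₂] [InnerProductSpace ℂ X₂] [FiniteDimensional ℂ X₂]
    [NormedAddCommGroup Z₁] [InnerProductSpace ℂ Z₁] [FiniteDimensional ℂ Z₁]
    [NormedAddCommGroup Z₂] [InnerProductSpace ℂ Z₂] [FiniteDimensional ℂ Z₂]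
    (A : D₁ → D₂ → (Z₂ →ₗ[ℂ] Z₁)) (Δ : D₁ → D₂ → (X₂ →ₗ[ℂ] X₁)) : ℝ≥0∞ :=
  ⨅ (k : ℕ) (Υ : D₁ → (Z₁ →ₗ[ℂ] PiLp 2 (fun _ : Fin k => X₁)))
    (Φ : D₂ → (Z₂ →ₗ[ℂ] PiLp 2 (fun _ : Fin k => X₂)))
    (_ : ∀ x y, A x y =
      LinearMap.adjoint (Υ x) ∘ₗ piBlock (fun _ : Fin k => Δ x y) ∘ₗ Φ y),
    (⨆ x, ENNReal.ofReal (opNorm (Υ x) ^ 2)) ⊔ (⨆ y, ENNReal.ofReal (opNorm (Φ y) ^ 2))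

/-- The state space `S ⊕ (X ⊗ ℂᵐ)` of a quantum query algorithm with oracle acting on `X`,
where the workspace `W₀` is realized as `ℂᵐ` and `X ⊗ ℂᵐ` as the `ℓ²`-sum of `m` copies
of `X`, and `⊕` is the `ℓ²`-direct sum. -/
abbrev stateSpace (S X : Type*) (m : ℕ) := WithLp 2 (S × PiLp 2 (fun _ : Fin m => X))

/-- The query operator `Q(O) = id_S ⊕ (O ⊗ id)`. -/
noncomputable def queryOp {X S : Type*}
    [NormedAddCommGroup X] [InnerProductSpace ℂ X]
    [NormedAddCommGroup S] [InnerProductSpace ℂ S]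
    (m : ℕ) (O : X →ₗ[ℂ] X) : stateSpace S X m →ₗ[ℂ] stateSpace S X m :=
  (WithLp.linearEquiv 2 ℂ (S × PiLp 2 (fun _ : Fin m => X))).symm.toLinearMap ∘ₗ
    (LinearMap.prodMap LinearMap.id (piBlock (fun _ : Fin m => O))) ∘ₗ
      (WithLp.linearEquiv 2 ℂ (S × PiLp 2 (fun _ : Fin m => X))).toLinearMap

/-- The unitary `A(O) = U_T ∘ Q(O)^{ε_T} ∘ ⋯ ∘ U_1 ∘ Q(O)^{ε_1} ∘ U_0` implemented by a
`T`-query algorithm with unitaries `U` and query signs `sgn` (`true` = direct query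
`Q(O)`, `false` = reverse query `Q(O)⁻¹ = Q(O*)`), run with input oracle `O`. -/
noncomputable def runAlg {X S : Type*}
    [NormedAddCommGroup X] [InnerProductSpace ℂ X] [FiniteDimensional ℂ X]
    [NormedAddCommGroup S] [InnerProductSpace ℂ S]
    (m : ℕ) :
    (T : ℕ) → (Fin (T + 1) → (stateSpace S X m →ₗ[ℂ] stateSpace S X m)) →
      (Fin T → Bool) → (X →ₗ[ℂ] X) →
      (stateSpace S X m →ₗ[ℂ] stateSpace S X m)
  | 0, U, _, _ => U 0
  | T + 1, U, sgn, O =>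
      U (Fin.last (T + 1)) ∘ₗ
        ((if sgn (Fin.last T) then queryOp m O else queryOp m (LinearMap.adjoint O)) ∘ₗ
          runAlg m T (fun t => U t.castSucc) (fun t => sgn t.castSucc) O)


section AuxForStatement9

local notation "⟪" x ", " y "⟫" => @inner ℂ _ _ x y

private lemma unitary_inner' {E : Type*} [NormedAddCommGroup E] [InnerProductSpace ℂ E]
    [FiniteDimensional ℂ E] {f : E →ₗ[ℂ] E} (hf : IsUnitaryMap f) (v w : E) :
    ⟪f v, f w⟫ = ⟪v, w⟫ := by
  rw [← LinearMap.adjoint_inner_left,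
    show LinearMap.adjoint f (f v) = v from congrFun (congrArg DFunLike.coe hf.1) v]

private lemma unitary_adjoint' {E : Type*} [NormedAddCommGroup E] [InnerProductSpace ℂ E]
    [FiniteDimensional ℂ E] {f : E →ₗ[ℂ] E} (hf : IsUnitaryMap f) :
    IsUnitaryMap (LinearMap.adjoint f) :=
  ⟨by rw [LinearMap.adjoint_adjoint]; exact hf.2,
   by rw [LinearMap.adjoint_adjoint]; exact hf.1⟩

private lemma norm_eq_of_inner_eq' {E F : Type*} [NormedAddCommGroup E] [InnerProductSpace ℂ E]
    [NormedAddCommGroup F] [InnerProductSpace ℂ F] {v : E} {w : F}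
    (h : ⟪v, v⟫ = ⟪w, w⟫) : ‖v‖ = ‖w‖ := by
  rw [@norm_eq_sqrt_re_inner ℂ, @norm_eq_sqrt_re_inner ℂ, h]

private lemma piBlock_apply' {ι : Type*} [Fintype ι] {X₁ X₂ : Type*}
    [NormedAddCommGroup X₁] [InnerProductSpace ℂ X₁]
    [NormedAddCommGroup X₂] [InnerProductSpace ℂ X₂]
    (Δ : ι → (X₂ →ₗ[ℂ] X₁)) (w : PiLp 2 (fun _ : ι => X₂)) (i : ι) :
    piBlock Δ w i = Δ i (w i) := rfl

variable {X S : Type} [NormedAddCommGroup X] [InnerProductSpace ℂ X] [FiniteDimensional ℂ X]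
  [NormedAddCommGroup S] [InnerProductSpace ℂ S] [FiniteDimensional ℂ S]

private lemma queryOp_fst' (m : ℕ) (O : X →ₗ[ℂ] X) (φ : stateSpace S X m) :
    (queryOp (S := S) m O φ).fst = φ.fst := rfl

private lemma queryOp_snd' (m : ℕ) (O : X →ₗ[ℂ] X) (φ : stateSpace S X m) :
    (queryOp (S := S) m O φ).snd = piBlock (fun _ : Fin m => O) φ.snd := rfl

private lemma snd_norm_le' {m : ℕ} (φ : stateSpace S X m) : ‖φ.snd‖ ≤ ‖φ‖ := by
  have h := WithLp.prod_norm_sq_eq_of_L2 φ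
  nlinarith [norm_nonneg φ.fst, norm_nonneg φ.snd, norm_nonneg φ]

private lemma piBlock_inner_unitary' {m : ℕ} {O : X →ₗ[ℂ] X} (hO : IsUnitaryMap O)
    (v w : PiLp 2 (fun _ : Fin m => X)) :
    ⟪piBlock (fun _ : Fin m => O) v, piBlock (fun _ : Fin m => O) w⟫ = ⟪v, w⟫ := by
  simp only [PiLp.inner_apply, piBlock_apply']
  exact Finset.sum_congr rfl fun i _ => unitary_inner' hO _ _

private lemma queryOp_inner' {m : ℕ} {O : X →ₗ[ℂ] X} (hO : IsUnitaryMap O)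
    (φ ψ : stateSpace S X m) :
    ⟪queryOp (S := S) m O φ, queryOp m O ψ⟫ = ⟪φ, ψ⟫ := by
  rw [WithLp.prod_inner_apply, WithLp.prod_inner_apply]
  simp only [WithLp.ofLp_fst, WithLp.ofLp_snd]
  rw [queryOp_fst', queryOp_fst',
    queryOp_snd', queryOp_snd', piBlock_inner_unitary' hO]

private lemma runAlg_inner' (m : ℕ) :
    ∀ (T : ℕ) (U : Fin (T + 1) → (stateSpace S X m →ₗ[ℂ] stateSpace S X m)),
      (∀ t, IsUnitaryMap (U t)) → ∀ (sgn : Fin T → Bool) (O : X →ₗ[ℂ] X),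
      IsUnitaryMap O → ∀ (v w : stateSpace S X m),
      ⟪runAlg m T U sgn O v, runAlg m T U sgn O w⟫ = ⟪v, w⟫
  | 0, U, hU, sgn, O, hO, v, w => unitary_inner' (hU 0) v w
  | T + 1, U, hU, sgn, O, hO, v, w => by
    show ⟪U (Fin.last (T + 1)) ((if sgn (Fin.last T) then queryOp m O
          else queryOp m (LinearMap.adjoint O)) (runAlg m T (fun t => U t.castSucc)
          (fun t => sgn t.castSucc) O v)),
        U (Fin.last (T + 1)) ((if sgn (Fin.last T) then queryOp m O
          else queryOp m (LinearMap.adjoint O)) (runAlg m T (fun t => U t.castSucc)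
          (fun t => sgn t.castSucc) O w))⟫ = ⟪v, w⟫
    rw [unitary_inner' (hU (Fin.last (T + 1)))]
    split
    · rw [queryOp_inner' hO]
      exact runAlg_inner' m T _ (fun t => hU _) _ O hO v w
    · rw [queryOp_inner' (unitary_adjoint' hO)]
      exact runAlg_inner' m T _ (fun t => hU _) _ O hO v w

private lemma step_true' {m : ℕ} {O₁ O₂ : X →ₗ[ℂ] X} (h₁ : IsUnitaryMap O₁)
    (φ₁ φ₂ : stateSpace S X m) :
    ⟪φ₁, φ₂⟫ - ⟪queryOp (S := S) m O₁ φ₁, queryOp m O₂ φ₂⟫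
      = ⟪piBlock (fun _ : Fin m => O₁) φ₁.snd,
          piBlock (fun _ : Fin m => O₁ - O₂) φ₂.snd⟫ := by
  rw [WithLp.prod_inner_apply, WithLp.prod_inner_apply]
  simp only [WithLp.ofLp_fst, WithLp.ofLp_snd]
  rw [queryOp_fst', queryOp_fst',
    queryOp_snd', queryOp_snd']
  simp only [PiLp.inner_apply, piBlock_apply']
  have hpt : ∀ i ∈ Finset.univ (α := Fin m),
      ⟪O₁ (φ₁.snd i), (O₁ - O₂) (φ₂.snd i)⟫
        = ⟪φ₁.snd i, φ₂.snd i⟫ - ⟪O₁ (φ₁.snd i), O₂ (φ₂.snd i)⟫ := by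
    intro i _
    rw [LinearMap.sub_apply, inner_sub_right, unitary_inner' h₁]
  rw [Finset.sum_congr rfl hpt, Finset.sum_sub_distrib]
  ring

private lemma step_false' {m : ℕ} {O₁ O₂ : X →ₗ[ℂ] X} (h₂ : IsUnitaryMap O₂)
    (φ₁ φ₂ : stateSpace S X m) :
    ⟪φ₁, φ₂⟫ - ⟪queryOp (S := S) m (LinearMap.adjoint O₁) φ₁,
        queryOp m (LinearMap.adjoint O₂) φ₂⟫
      = ⟪φ₁.snd, piBlock (fun _ : Fin m => O₁ - O₂)
          (-(piBlock (fun _ : Fin m => LinearMap.adjoint O₂) φ₂.snd))⟫ := by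
  rw [WithLp.prod_inner_apply, WithLp.prod_inner_apply]
  simp only [WithLp.ofLp_fst, WithLp.ofLp_snd]
  rw [queryOp_fst', queryOp_fst',
    queryOp_snd', queryOp_snd']
  simp only [PiLp.inner_apply, piBlock_apply']
  have hpt : ∀ i ∈ Finset.univ (α := Fin m),
      ⟪φ₁.snd i, (O₁ - O₂) ((-(piBlock (fun _ : Fin m => LinearMap.adjoint O₂) φ₂.snd)) i)⟫
        = ⟪φ₁.snd i, φ₂.snd i⟫
          - ⟪LinearMap.adjoint O₁ (φ₁.snd i), LinearMap.adjoint O₂ (φ₂.snd i)⟫ := by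
    intro i _
    have hneg : (-(piBlock (fun _ : Fin m => LinearMap.adjoint O₂) φ₂.snd)) i
        = -(LinearMap.adjoint O₂ (φ₂.snd i)) := rfl
    rw [hneg, LinearMap.sub_apply, inner_sub_right, map_neg, map_neg, inner_neg_right,
      inner_neg_right, ← LinearMap.adjoint_inner_left O₁,
      show O₂ (LinearMap.adjoint O₂ (φ₂.snd i)) = φ₂.snd i from
        congrFun (congrArg DFunLike.coe h₂.2) (φ₂.snd i)]
    ring
  rw [Finset.sum_congr rfl hpt, Finset.sum_sub_distrib]
  ring

private lemma key_telescope (m : ℕ) {D : Type} [Fintype D] :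
    ∀ (T : ℕ) (U : Fin (T + 1) → (stateSpace S X m →ₗ[ℂ] stateSpace S X m)),
      (∀ t, IsUnitaryMap (U t)) → ∀ (sgn : Fin T → Bool)
      (O : D → (X →ₗ[ℂ] X)), (∀ x, IsUnitaryMap (O x)) →
      ∀ (ρ : D → stateSpace S X m),
      ∃ α β : D → Fin T → PiLp 2 (fun _ : Fin m => X),
        (∀ x t, ‖α x t‖ ≤ ‖ρ x‖) ∧ (∀ y t, ‖β y t‖ ≤ ‖ρ y‖) ∧
        ∀ x y, ⟪ρ x, ρ y⟫
            - ⟪runAlg m T U sgn (O x) (ρ x), runAlg m T U sgn (O y) (ρ y)⟫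
          = ∑ t, ⟪α x t, piBlock (fun _ : Fin m => O x - O y) (β y t)⟫ := by
  intro T
  induction T with
  | zero =>
    intro U hU sgn O hO ρ
    refine ⟨fun _ t => t.elim0, fun _ t => t.elim0, fun _ t => t.elim0, fun _ t => t.elim0, ?_⟩
    intro x y
    rw [show runAlg m 0 U sgn (O x) = U 0 from rfl, show runAlg m 0 U sgn (O y) = U 0 from rfl,
      unitary_inner' (hU 0)]
    simp
  | succ T ih =>
    intro U hU sgn O hO ρ
    obtain ⟨α, β, hα, hβ, hsum⟩ := ih (fun t => U t.castSucc) (fun t => hU _)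
      (fun t => sgn t.castSucc) O hO ρ
    have hψnorm : ∀ x, ‖runAlg m T (fun t => U t.castSucc) (fun t => sgn t.castSucc)
        (O x) (ρ x)‖ = ‖ρ x‖ := fun x =>
      norm_eq_of_inner_eq' (runAlg_inner' m T _ (fun t => hU _) _ _ (hO x) _ _)
    have hrunsucc : ∀ x, runAlg m (T + 1) U sgn (O x) (ρ x)
        = U (Fin.last (T + 1)) ((if sgn (Fin.last T) then queryOp m (O x)
            else queryOp m (LinearMap.adjoint (O x)))
          (runAlg m T (fun t => U t.castSucc) (fun t => sgn t.castSucc) (O x) (ρ x))) :=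
      fun x => rfl
    by_cases hs : sgn (Fin.last T)
    · refine ⟨fun x => Fin.snoc (α x) (piBlock (fun _ : Fin m => O x)
          ((runAlg m T (fun t => U t.castSucc) (fun t => sgn t.castSucc) (O x) (ρ x)).snd)),
        fun y => Fin.snoc (β y)
          ((runAlg m T (fun t => U t.castSucc) (fun t => sgn t.castSucc) (O y) (ρ y)).snd),
        ?_, ?_, ?_⟩
      · intro x t
        refine Fin.lastCases ?_ (fun t => ?_) t
        · simp only [Fin.snoc_last]
          calc ‖piBlock (fun _ : Fin m => O x) ((runAlg m T (fun t => U t.castSucc)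
                (fun t => sgn t.castSucc) (O x) (ρ x)).snd)‖
              = ‖(runAlg m T (fun t => U t.castSucc) (fun t => sgn t.castSucc)
                  (O x) (ρ x)).snd‖ :=
                norm_eq_of_inner_eq' (piBlock_inner_unitary' (hO x) _ _)
            _ ≤ ‖runAlg m T (fun t => U t.castSucc) (fun t => sgn t.castSucc)
                  (O x) (ρ x)‖ := snd_norm_le' _
            _ = ‖ρ x‖ := hψnorm x
        · simp only [Fin.snoc_castSucc]; exact hα x t
      · intro y t
        refine Fin.lastCases ?_ (fun t => ?_) t
        · simp only [Fin.snoc_last]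
          calc ‖(runAlg m T (fun t => U t.castSucc) (fun t => sgn t.castSucc)
                  (O y) (ρ y)).snd‖
              ≤ ‖runAlg m T (fun t => U t.castSucc) (fun t => sgn t.castSucc)
                  (O y) (ρ y)‖ := snd_norm_le' _
            _ = ‖ρ y‖ := hψnorm y
        · simp only [Fin.snoc_castSucc]; exact hβ y t
      · intro x y
        rw [Fin.sum_univ_castSucc]
        simp only [Fin.snoc_castSucc, Fin.snoc_last]
        rw [← hsum x y, hrunsucc x, hrunsucc y, if_pos hs, if_pos hs,
          unitary_inner' (hU (Fin.last (T + 1))), ← step_true' (hO x)]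
        ring
    · refine ⟨fun x => Fin.snoc (α x)
          ((runAlg m T (fun t => U t.castSucc) (fun t => sgn t.castSucc) (O x) (ρ x)).snd),
        fun y => Fin.snoc (β y) (-(piBlock (fun _ : Fin m => LinearMap.adjoint (O y))
          ((runAlg m T (fun t => U t.castSucc) (fun t => sgn t.castSucc) (O y) (ρ y)).snd))),
        ?_, ?_, ?_⟩
      · intro x t
        refine Fin.lastCases ?_ (fun t => ?_) t
        · simp only [Fin.snoc_last]
          calc ‖(runAlg m T (fun t => U t.castSucc) (fun t => sgn t.castSucc)
                  (O x) (ρ x)).snd‖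
              ≤ ‖runAlg m T (fun t => U t.castSucc) (fun t => sgn t.castSucc)
                  (O x) (ρ x)‖ := snd_norm_le' _
            _ = ‖ρ x‖ := hψnorm x
        · simp only [Fin.snoc_castSucc]; exact hα x t
      · intro y t
        refine Fin.lastCases ?_ (fun t => ?_) t
        · simp only [Fin.snoc_last, norm_neg]
          calc ‖piBlock (fun _ : Fin m => LinearMap.adjoint (O y))
                ((runAlg m T (fun t => U t.castSucc) (fun t => sgn t.castSucc)
                  (O y) (ρ y)).snd)‖
              = ‖(runAlg m T (fun t => U t.castSucc) (fun t => sgn t.castSucc)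
                  (O y) (ρ y)).snd‖ :=
                norm_eq_of_inner_eq' (piBlock_inner_unitary' (unitary_adjoint' (hO y)) _ _)
            _ ≤ ‖runAlg m T (fun t => U t.castSucc) (fun t => sgn t.castSucc)
                  (O y) (ρ y)‖ := snd_norm_le' _
            _ = ‖ρ y‖ := hψnorm y
        · simp only [Fin.snoc_castSucc]; exact hβ y t
      · intro x y
        rw [Fin.sum_univ_castSucc]
        simp only [Fin.snoc_castSucc, Fin.snoc_last]
        rw [← hsum x y, hrunsucc x, hrunsucc y, if_neg hs, if_neg hs,
          unitary_inner' (hU (Fin.last (T + 1))), ← step_false' (hO y)]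
        ring

end AuxForStatement9

/-- Adversary lower bound for exact state conversion: if a `T`-query
quantum algorithm with oracle acting on `X` converts the unit vector `ρ_x` into the unit
vector `σ_x` whenever its oracle is replaced by the unitary `O_x` (for every `x ∈ D`),
then `γ₂(⟨ρ_x,ρ_y⟩ − ⟨σ_x,σ_y⟩ | O_x − O_y) ≤ T`. -/
theorem statement9 {D : Type} [Fintype D] {X S : Type}
    [NormedAddCommGroup X] [InnerProductSpace ℂ X] [FiniteDimensional ℂ X]
    [NormedAddCommGroup S] [InnerProductSpace ℂ S] [FiniteDimensional ℂ S]
    (m T : ℕ)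
    (O : D → (X →ₗ[ℂ] X)) (hO : ∀ x, IsUnitaryMap (O x))
    (U : Fin (T + 1) → (stateSpace S X m →ₗ[ℂ] stateSpace S X m))
    (hU : ∀ t, IsUnitaryMap (U t)) (sgn : Fin T → Bool)
    (ρ σ : D → stateSpace S X m)
    (hρ : ∀ x, ‖ρ x‖ = 1) (hσ : ∀ x, ‖σ x‖ = 1)
    (hrun : ∀ x, runAlg m T U sgn (O x) (ρ x) = σ x) :
    relGamma2
      (fun x y => scalarMap ((inner ℂ (ρ x) (ρ y) : ℂ) - (inner ℂ (σ x) (σ y) : ℂ)))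
      (fun x y => O x - O y) ≤ (T : ℝ≥0∞) := by
  classical
  obtain ⟨α, β, hα, hβ, hsum⟩ := key_telescope m T U hU sgn O hO ρ
  have hsum' : ∀ x y, (inner ℂ (ρ x) (ρ y) : ℂ) - (inner ℂ (σ x) (σ y) : ℂ)
      = ∑ t, (inner ℂ (α x t) (piBlock (fun _ : Fin m => O x - O y) (β y t)) : ℂ) := by
    intro x y
    rw [← hrun x, ← hrun y]
    exact hsum x y
  set k : ℕ := T * m with hk
  let e : Fin T × Fin m ≃ Fin k := finProdFinEquiv
  let u : D → PiLp 2 (fun _ : Fin k => X) := fun x => WithLp.toLp 2 (fun j => α x (e.symm j).1 (e.symm j).2)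
  let v : D → PiLp 2 (fun _ : Fin k => X) := fun y => WithLp.toLp 2 (fun j => β y (e.symm j).1 (e.symm j).2)
  have huj : ∀ x j, u x j = α x (e.symm j).1 (e.symm j).2 := fun _ _ => rfl
  have hvj : ∀ y j, v y j = β y (e.symm j).1 (e.symm j).2 := fun _ _ => rfl
  let Υ : D → (ℂ →ₗ[ℂ] PiLp 2 (fun _ : Fin k => X)) :=
    fun x => LinearMap.toSpanSingleton ℂ _ (u x)
  let Φ : D → (ℂ →ₗ[ℂ] PiLp 2 (fun _ : Fin k => X)) :=
    fun y => LinearMap.toSpanSingleton ℂ _ (v y)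
  have hadj : ∀ (w₀ w : PiLp 2 (fun _ : Fin k => X)),
      LinearMap.adjoint (LinearMap.toSpanSingleton ℂ (PiLp 2 (fun _ : Fin k => X)) w₀) w
        = (inner ℂ w₀ w : ℂ) := by
    intro w₀ w
    have h1 : LinearMap.adjoint (LinearMap.toSpanSingleton ℂ
          (PiLp 2 (fun _ : Fin k => X)) w₀) w
        = (inner ℂ (1 : ℂ) (LinearMap.adjoint (LinearMap.toSpanSingleton ℂ
            (PiLp 2 (fun _ : Fin k => X)) w₀) w) : ℂ) := by
      simp [RCLike.inner_apply]
    rw [h1, LinearMap.adjoint_inner_right]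
    simp [LinearMap.toSpanSingleton_apply]
  have hmain : ∀ x y, (inner ℂ (u x) (piBlock (fun _ : Fin k => O x - O y) (v y)) : ℂ)
      = (inner ℂ (ρ x) (ρ y) : ℂ) - (inner ℂ (σ x) (σ y) : ℂ) := by
    intro x y
    rw [hsum' x y, PiLp.inner_apply]
    calc ∑ j : Fin k, (inner ℂ (u x j) (piBlock (fun _ : Fin k => O x - O y) (v y) j) : ℂ)
        = ∑ p : Fin T × Fin m, (inner ℂ (α x p.1 p.2) ((O x - O y) (β y p.1 p.2)) : ℂ) := by
          rw [← Equiv.sum_comp e (fun j =>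
            (inner ℂ (u x j) (piBlock (fun _ : Fin k => O x - O y) (v y) j) : ℂ))]
          refine Finset.sum_congr rfl fun p _ => ?_
          rw [piBlock_apply', huj, hvj, Equiv.symm_apply_apply]
      _ = ∑ t : Fin T, ∑ i : Fin m, (inner ℂ (α x t i) ((O x - O y) (β y t i)) : ℂ) := by
          rw [Fintype.sum_prod_type]
      _ = ∑ t : Fin T, (inner ℂ (α x t)
            (piBlock (fun _ : Fin m => O x - O y) (β y t)) : ℂ) := by
          refine Finset.sum_congr rfl fun t _ => ?_
          rw [PiLp.inner_apply]
          exact Finset.sum_congr rfl fun i _ => by rw [piBlock_apply']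
  have hfact : ∀ x y,
      scalarMap ((inner ℂ (ρ x) (ρ y) : ℂ) - (inner ℂ (σ x) (σ y) : ℂ))
        = LinearMap.adjoint (Υ x) ∘ₗ piBlock (fun _ : Fin k => O x - O y) ∘ₗ Φ y := by
    intro x y
    apply LinearMap.ext
    intro c
    simp only [scalarMap, LinearMap.smul_apply, LinearMap.id_apply, smul_eq_mul,
      LinearMap.comp_apply]
    have hΦ : Φ y c = c • v y := LinearMap.toSpanSingleton_apply ℂ _ (v y) c
    rw [hΦ, map_smul, map_smul, hadj, hmain x y, smul_eq_mul]
    ring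
  have hnorm : ∀ (γ : D → Fin T → PiLp 2 (fun _ : Fin m => X)),
      (∀ x t, ‖γ x t‖ ≤ ‖ρ x‖) →
      ∀ (w : PiLp 2 (fun _ : Fin k => X)) (x : D),
      (∀ j, w j = γ x (e.symm j).1 (e.symm j).2) →
      ‖w‖ ^ 2 ≤ (T : ℝ) := by
    intro γ hγ w x hw
    rw [PiLp.norm_sq_eq_of_L2]
    calc ∑ j : Fin k, ‖w j‖ ^ 2
        = ∑ p : Fin T × Fin m, ‖γ x p.1 p.2‖ ^ 2 := by
          rw [← Equiv.sum_comp e (fun j => ‖w j‖ ^ 2)]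
          refine Finset.sum_congr rfl fun p _ => ?_
          rw [hw, Equiv.symm_apply_apply]
      _ = ∑ t : Fin T, ∑ i : Fin m, ‖γ x t i‖ ^ 2 := by rw [Fintype.sum_prod_type]
      _ = ∑ t : Fin T, ‖γ x t‖ ^ 2 := by
          refine Finset.sum_congr rfl fun t _ => ?_
          rw [PiLp.norm_sq_eq_of_L2]
      _ ≤ ∑ _t : Fin T, 1 := by
          refine Finset.sum_le_sum fun t _ => ?_
          have h1 := hγ x t
          have h2 := hρ x
          nlinarith [norm_nonneg (γ x t)]
      _ = (T : ℝ) := by simp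
  have hop : ∀ (w₀ : PiLp 2 (fun _ : Fin k => X)),
      opNorm (LinearMap.toSpanSingleton ℂ (PiLp 2 (fun _ : Fin k => X)) w₀) ≤ ‖w₀‖ := by
    intro w₀
    unfold opNorm
    apply ContinuousLinearMap.opNorm_le_bound _ (norm_nonneg w₀)
    intro c
    have h : LinearMap.toContinuousLinearMap (LinearMap.toSpanSingleton ℂ
        (PiLp 2 (fun _ : Fin k => X)) w₀) c = c • w₀ := rfl
    rw [h, norm_smul]
    exact le_of_eq (mul_comm _ _)
  have hboundgen : ∀ (w₀ : PiLp 2 (fun _ : Fin k => X)), ‖w₀‖ ^ 2 ≤ (T : ℝ) →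
      ENNReal.ofReal (opNorm (LinearMap.toSpanSingleton ℂ
        (PiLp 2 (fun _ : Fin k => X)) w₀) ^ 2) ≤ (T : ℝ≥0∞) := by
    intro w₀ h2
    have h1 := hop w₀
    have h0 : (0:ℝ) ≤ opNorm (LinearMap.toSpanSingleton ℂ
        (PiLp 2 (fun _ : Fin k => X)) w₀) := norm_nonneg _
    have h3 : opNorm (LinearMap.toSpanSingleton ℂ
        (PiLp 2 (fun _ : Fin k => X)) w₀) ^ 2 ≤ (T : ℝ) := by
      nlinarith [norm_nonneg w₀]
    calc ENNReal.ofReal (opNorm (LinearMap.toSpanSingleton ℂ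
          (PiLp 2 (fun _ : Fin k => X)) w₀) ^ 2) ≤ ENNReal.ofReal (T : ℝ) :=
        ENNReal.ofReal_le_ofReal h3
      _ = (T : ℝ≥0∞) := ENNReal.ofReal_natCast T
  refine le_trans (iInf_le_of_le k (iInf_le_of_le Υ (iInf_le_of_le Φ
    (iInf_le_of_le hfact le_rfl)))) ?_
  refine sup_le (iSup_le fun x => ?_) (iSup_le fun y => ?_)
  · exact hboundgen (u x) (hnorm α hα (u x) x (huj x))
  · exact hboundgen (v y) (hnorm β hβ (v y) y (hvj y))

end
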